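/- Let $0 < c < 1$ and let $(n_k)_k$, $(p_k)_k$ satisfy $p_k = \mu/n_k$ for fixed $\mu$ with $0 < \mu < 1$, and $n_k \log(n_k) \leq c \log(k)$ with $n_k \to \infty$. Then $k\, p_k^{n_k} \to \infty$, hence the sample maximum of $k$ i.i.d. $\mathrm{Bin}(n_k,p_k)$ observations equals $n_k$ with probability tending to one. -/
import Mathlib


open Filter

/-- If `p_k = μ/n_k` with `0 < μ < 1` fixed, `n_k → ∞`, and
`n_k log n_k ≤ c log k` with `0 < c < 1`, then `k p_k^{n_k} → ∞`, hence the
sample maximum equals `n_k` with probability `1-(1-p_k^{n_k})^k` tending to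
one. -/
theorem sample_maximum_consistent_log_regime
    (c μ : ℝ) (hc0 : 0 < c) (hc1 : c < 1) (hμ0 : 0 < μ) (hμ1 : μ < 1)
    (n : ℕ → ℕ) (hn : Tendsto n atTop atTop)
    (h : ∀ k : ℕ, 2 ≤ k → (n k : ℝ) * Real.log (n k) ≤ c * Real.log k) :
    Tendsto (fun k : ℕ => (k : ℝ) * (μ / n k) ^ (n k)) atTop atTop ∧
      Tendsto (fun k : ℕ => 1 - (1 - (μ / n k) ^ (n k)) ^ k) atTop (nhds 1) := by
  have hL : 0 < -Real.log μ := by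
    have := Real.log_neg hμ0 hμ1
    linarith
  obtain ⟨L, hLdef⟩ : ∃ L : ℝ, L = -Real.log μ := ⟨_, rfl⟩
  rw [← hLdef] at hL
  obtain ⟨M, hMdef⟩ : ∃ M : ℝ, M = 2 * c * L / (1 - c) := ⟨_, rfl⟩
  have hM : 0 < M := hMdef ▸ div_pos (mul_pos (by linarith : (0:ℝ) < 2 * c) hL) (by linarith)
  -- the log of the main quantity tends to ∞
  have hg : Tendsto (fun k : ℕ => Real.log k - (n k : ℝ) * Real.log (n k)
      - (n k : ℝ) * L) atTop atTop := by
    have hlog : Tendsto (fun k : ℕ => ((1 - c) / 2) * Real.log k) atTop atTop := by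
      apply Tendsto.const_mul_atTop (by linarith)
      exact Real.tendsto_log_atTop.comp tendsto_natCast_atTop_atTop
    apply tendsto_atTop_mono' _ _ hlog
    have hev : ∀ᶠ k : ℕ in atTop, Real.exp M ≤ (n k : ℝ) := by
      have : ∀ᶠ k : ℕ in atTop, ⌈Real.exp M⌉₊ ≤ n k := hn.eventually_ge_atTop _
      filter_upwards [this] with k hk
      exact le_trans (Nat.le_ceil _) (by exact_mod_cast hk)
    filter_upwards [hev, eventually_ge_atTop 2] with k hk hk2
    have hnk : (0:ℝ) < (n k : ℝ) := lt_of_lt_of_le (Real.exp_pos M) hk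
    have hlogn : M ≤ Real.log (n k) := (Real.le_log_iff_exp_le hnk).2 hk
    have hlogk : 0 ≤ Real.log k := Real.log_nonneg (by exact_mod_cast hk2.trans' one_le_two)
    have h1 : (n k : ℝ) * M ≤ c * Real.log k :=
      le_trans (mul_le_mul_of_nonneg_left hlogn hnk.le) (h k hk2)
    have h2 : (n k : ℝ) * L ≤ ((1 - c) / 2) * Real.log k := by
      have hMeq : M * (1 - c) = 2 * c * L := by
        rw [hMdef, div_mul_eq_mul_div, mul_div_assoc, div_self (by linarith : (1:ℝ) - c ≠ 0),
          mul_one]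
      have hA : (n k : ℝ) * (2 * c * L) ≤ c * Real.log k * (1 - c) := by
        calc (n k : ℝ) * (2 * c * L) = (n k : ℝ) * M * (1 - c) := by rw [← hMeq]; ring
          _ ≤ c * Real.log k * (1 - c) :=
            mul_le_mul_of_nonneg_right h1 (by linarith)
      have h2c : (0:ℝ) < 2 * c := by linarith
      apply le_of_mul_le_mul_right _ h2c
      nlinarith [hA]
    have h3 := h k hk2
    linarith
  have hf : Tendsto (fun k : ℕ => (k : ℝ) * (μ / n k) ^ (n k)) atTop atTop := by
    apply Tendsto.congr' _ (Real.tendsto_exp_atTop.comp hg)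
    have hev : ∀ᶠ k : ℕ in atTop, 1 ≤ n k := hn.eventually_ge_atTop 1
    filter_upwards [hev, eventually_ge_atTop 1] with k hk hk1
    have hnk : (0:ℝ) < (n k : ℝ) := by exact_mod_cast hk
    have hkp : (0:ℝ) < (k : ℝ) := by exact_mod_cast hk1
    have hq : (0:ℝ) < μ / n k := div_pos hμ0 hnk
    have hlogq : Real.log (μ / n k) = Real.log μ - Real.log (n k) :=
      Real.log_div hμ0.ne' hnk.ne'
    simp only [Function.comp]
    rw [show Real.log k - (n k : ℝ) * Real.log (n k) - (n k : ℝ) * L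
        = Real.log k + (n k : ℝ) * Real.log (μ / n k) by rw [hlogq, hLdef]; ring,
      Real.exp_add, Real.exp_log hkp, Real.exp_nat_mul, Real.exp_log hq]
  refine ⟨hf, ?_⟩
  have h2 : Tendsto (fun k : ℕ => ((1 - (μ / n k) ^ (n k)) ^ k : ℝ)) atTop (nhds 0) := by
    have hexp : Tendsto (fun k : ℕ => Real.exp (-((k : ℝ) * (μ / n k) ^ (n k))))
        atTop (nhds 0) := Real.tendsto_exp_atBot.comp (tendsto_neg_atBot_iff.2 hf)
    apply squeeze_zero' ?_ ?_ hexp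
    · filter_upwards [hn.eventually_ge_atTop 1] with k hk
      have hnk : (1:ℝ) ≤ (n k : ℝ) := by exact_mod_cast hk
      have hx1 : (μ / n k) ^ (n k) ≤ 1 :=
        pow_le_one₀ (by positivity) (by
          rw [div_le_one (by linarith)]; linarith)
      exact pow_nonneg (by linarith) k
    · filter_upwards [hn.eventually_ge_atTop 1] with k hk
      have hnk : (1:ℝ) ≤ (n k : ℝ) := by exact_mod_cast hk
      set x : ℝ := (μ / n k) ^ (n k) with hxdef
      have hx0 : 0 ≤ x := by positivity
      have hx1 : x ≤ 1 := pow_le_one₀ (by positivity) (by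
        rw [div_le_one (by linarith)]; linarith)
      have hle : 1 - x ≤ Real.exp (-x) := by
        have := Real.add_one_le_exp (-x); linarith
      calc (1 - x) ^ k ≤ (Real.exp (-x)) ^ k :=
            pow_le_pow_left₀ (by linarith) hle k
        _ = Real.exp (-(↑k * x)) := by
            rw [← Real.exp_nat_mul]; ring_nf
  have := (tendsto_const_nhds (x := (1:ℝ)) (f := atTop)).sub h2
  simpa using this
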